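/- For 0 < ν ≤ 1/10 and any β ≥ 0, the synchronized active state x_AA = (1,1) is the unique strict global minimizer of the coupled potential Ṽ on ℝ²: Ṽ(x₁,x₂) > Ṽ(1,1) for all (x₁,x₂) ≠ (1,1). -/
import Mathlib


/-- The single-node potential `V(x) = x⁴/4 - x³/3 + ν(x - x²/2)`. -/
noncomputable def V (ν x : ℝ) : ℝ := x ^ 4 / 4 - x ^ 3 / 3 + ν * (x - x ^ 2 / 2)

/-- The coupled two-node potential `Ṽ(x₁,x₂) = V(x₁) + V(x₂) + (β/2)(x₁-x₂)²`. -/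
noncomputable def Vt (ν β x₁ x₂ : ℝ) : ℝ :=
  V ν x₁ + V ν x₂ + β / 2 * (x₁ - x₂) ^ 2

lemma V_ge {ν : ℝ} (hν1 : ν ≤ 1 / 10) (x : ℝ) : V ν 1 ≤ V ν x := by
  unfold V
  nlinarith [sq_nonneg (x - 1), sq_nonneg (x + 1/3), sq_nonneg ((x - 1) * (x + 1/3)),
    mul_le_mul_of_nonneg_left hν1 (sq_nonneg (x - 1))]

lemma V_gt {ν : ℝ} (hν1 : ν ≤ 1 / 10) {x : ℝ} (hx : x ≠ 1) : V ν 1 < V ν x := by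
  have hx0 : x - 1 ≠ 0 := sub_ne_zero.mpr hx
  have h1 : 0 < (x - 1) ^ 2 := by positivity
  unfold V
  nlinarith [sq_nonneg (x + 1/3), sq_nonneg ((x - 1) * (x + 1/3)),
    mul_le_mul_of_nonneg_left hν1 (sq_nonneg (x - 1))]

/-- For `0 < ν ≤ 1/10` and `β ≥ 0`, the synchronized active state `x_AA = (1,1)`
is the unique strict global minimizer of `Ṽ` on `ℝ²`. -/
theorem active_state_global_min {ν β : ℝ} (hν0 : 0 < ν) (hν1 : ν ≤ 1 / 10)
    (hβ : 0 ≤ β) :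
    ∀ p : ℝ × ℝ, p ≠ (1, 1) → Vt ν β 1 1 < Vt ν β p.1 p.2 := by
  rintro ⟨x₁, x₂⟩ hp
  have h : x₁ ≠ 1 ∨ x₂ ≠ 1 := by
    by_contra h
    push_neg at h
    exact hp (by simp [h.1, h.2])
  have hc : 0 ≤ β / 2 * (x₁ - x₂) ^ 2 := by positivity
  rcases h with h | h
  · have := V_gt hν1 h
    have := V_ge hν1 x₂
    unfold Vt
    simp only []
    nlinarith
  · have := V_gt hν1 h
    have := V_ge hν1 x₁
    unfold Vt
    nlinarith
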